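/- (Proposition 1(b)) Let r ≥ 2 be a natural number and let 0 < d_0 < √(1 − 1/r). Define p* ∈ ℝ^r by p* = u_r + d_0·√(1 − 1/r)·(1, −1/(r−1), …, −1/(r−1)). Then p* minimizes the divergence J(u_r, p) = ∑_{i=1}^r (p_i − 1/r)·ln(p_i) over all p ∈ ℝ^r satisfying p_i > 0 for all i, ∑_{i=1}^r p_i = 1, and ∑_{i=1}^r (p_i − 1/r)^2 = d_0^2; that is, for every such p, J(u_r, p) ≥ J(u_r, p*). -/

import Mathlib

open Set Real

/-- Concavity of `log x - c/x + (m*x + k)` on `Ioi 0`, for `c ≥ 0`. -/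
lemma psi_concave (c m k : ℝ) (hc : 0 ≤ c) :
    ConcaveOn ℝ (Set.Ioi (0:ℝ)) (fun x => Real.log x - c * x⁻¹ + (m * x + k)) := by
  have h1 : ConcaveOn ℝ (Set.Ioi (0:ℝ)) Real.log := strictConcaveOn_log_Ioi.concaveOn
  have h2 : ConvexOn ℝ (Set.Ioi (0:ℝ)) (fun x : ℝ => x ^ (-1 : ℤ)) :=
    (strictConvexOn_zpow (by norm_num) (by norm_num)).convexOn
  have h2' : ConcaveOn ℝ (Set.Ioi (0:ℝ)) (fun x : ℝ => -(c • x ^ (-1 : ℤ))) :=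
    (h2.smul hc).neg
  have h3 : ConcaveOn ℝ (Set.Ioi (0:ℝ)) (fun x : ℝ => m * x + k) := by
    refine ⟨convex_Ioi 0, ?_⟩
    intro x _ y _ s t hs ht hst
    simp only [smul_eq_mul]
    have : s * (m * x + k) + t * (m * y + k) = m * (s * x + t * y) + k := by
      linear_combination k * hst
    rw [this]
  have := (h1.add h2').add h3
  refine this.congr ?_
  intro x _
  simp only [Pi.add_apply, zpow_neg, zpow_one, smul_eq_mul]
  ring

lemma key_ineq (c b a μ L : ℝ) (hc : 0 < c) (hb : 0 < b) (hba : b < a)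
    (hL : L = Real.log b + 1 - c / b)
    (hμ : (a - c) * Real.log a = (b - c) * Real.log b + L * (a - b) + μ * (a - b) ^ 2) :
    ∀ x : ℝ, 0 < x → x ≤ a →
      (b - c) * Real.log b + L * (x - b) + μ * (x - b) ^ 2 ≤ (x - c) * Real.log x := by
  set h : ℝ → ℝ := fun x => (x - c) * Real.log x -
      ((b - c) * Real.log b + L * (x - b) + μ * (x - b) ^ 2) with hh
  set ψ : ℝ → ℝ := fun x => Real.log x - c * x⁻¹ + ((-(2 * μ)) * x + (1 - L + 2 * μ * b))
    with hψ
  have ha : 0 < a := hb.trans hba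
  have hderiv : ∀ x ∈ Set.Ioi (0:ℝ), HasDerivAt h (ψ x) x := by
    intro x hx
    have hx0 : (x:ℝ) ≠ 0 := ne_of_gt hx
    have h1 : HasDerivAt (fun x : ℝ => (x - c) * Real.log x)
        (1 * Real.log x + (x - c) * x⁻¹) x :=
      ((hasDerivAt_id x).sub_const c).mul (Real.hasDerivAt_log hx0)
    have h2 : HasDerivAt (fun x : ℝ => (b - c) * Real.log b + L * (x - b) + μ * (x - b) ^ 2)
        (L * 1 + μ * (↑2 * (x - b) ^ 1 * 1)) x := by
      have e1 : HasDerivAt (fun x : ℝ => L * (x - b)) (L * 1) x :=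
        ((hasDerivAt_id x).sub_const b).const_mul L
      have e2 : HasDerivAt (fun x : ℝ => μ * (x - b) ^ 2) (μ * (↑2 * (x - b) ^ 1 * 1)) x :=
        (((hasDerivAt_id x).sub_const b).pow 2).const_mul μ
      exact (e1.const_add _).add e2
    have := h1.sub h2
    refine this.congr_deriv ?_
    simp only [pow_one]
    rw [sub_mul, mul_inv_cancel₀ hx0]
    ring
  have hcIoi : ContinuousOn h (Set.Ioi (0:ℝ)) :=
    fun x hx => ((hderiv x hx).continuousAt).continuousWithinAt
  have hdIoi : DifferentiableOn ℝ h (Set.Ioi (0:ℝ)) :=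
    fun x hx => ((hderiv x hx).differentiableAt).differentiableWithinAt
  have hψb : ψ b = 0 := by
    have hb0 : (b:ℝ) ≠ 0 := ne_of_gt hb
    rw [hψ]; simp only []
    rw [hL]; field_simp; ring
  have hhb : h b = 0 := by rw [hh]; simp only []; ring
  have hha : h a = 0 := by rw [hh]; simp only []; rw [hμ]; ring
  -- Rolle
  obtain ⟨ξ, hξmem, hψξ⟩ : ∃ ξ ∈ Set.Ioo b a, ψ ξ = 0 := by
    refine exists_hasDerivAt_eq_zero hba (hcIoi.mono ?_) (by rw [hha, hhb]) ?_
    · intro x hx; exact lt_of_lt_of_le hb hx.1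
    · intro x hx; exact hderiv x (lt_trans hb hx.1)
  have hξ1 : b < ξ := hξmem.1
  have hξ2 : ξ < a := hξmem.2
  have hξpos : 0 < ξ := hb.trans hξ1
  have hconc : ConcaveOn ℝ (Set.Ioi (0:ℝ)) ψ :=
    psi_concave c (-(2 * μ)) (1 - L + 2 * μ * b) hc.le
  -- sign of ψ on the three regions
  have hψleft : ∀ x : ℝ, 0 < x → x ≤ b → ψ x ≤ 0 := by
    intro x hx hxb
    rcases eq_or_lt_of_le hxb with rfl | hxb
    · exact le_of_eq hψb
    · have hs : (0:ℝ) < (ξ - b) / (ξ - x) := by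
        apply div_pos <;> linarith
      have ht : (0:ℝ) ≤ (b - x) / (ξ - x) := by
        apply div_nonneg <;> linarith
      have hne : (ξ:ℝ) - x ≠ 0 := ne_of_gt (by linarith)
      have hst : (ξ - b) / (ξ - x) + (b - x) / (ξ - x) = 1 := by
        rw [← add_div, show ξ - b + (b - x) = ξ - x by ring, div_self hne]
      have hcomb : ((ξ - b) / (ξ - x)) • x + ((b - x) / (ξ - x)) • ξ = b := by
        simp only [smul_eq_mul]
        rw [div_mul_eq_mul_div, div_mul_eq_mul_div, ← add_div, div_eq_iff hne]
        ring
      have h2 := hconc.2 (Set.mem_Ioi.mpr hx) (Set.mem_Ioi.mpr hξpos) hs.le ht hst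
      rw [hcomb, hψb, hψξ, smul_eq_mul, smul_eq_mul] at h2
      have h3 : ((ξ - b) / (ξ - x)) * ψ x ≤ ((ξ - b) / (ξ - x)) * 0 := by linarith
      exact (mul_le_mul_iff_right₀ hs).mp h3
  have hψmid : ∀ x : ℝ, b ≤ x → x ≤ ξ → 0 ≤ ψ x := by
    intro x hbx hxξ
    have hs : (0:ℝ) ≤ (ξ - x) / (ξ - b) := by apply div_nonneg <;> linarith
    have ht : (0:ℝ) ≤ (x - b) / (ξ - b) := by apply div_nonneg <;> linarith
    have hne : (ξ:ℝ) - b ≠ 0 := ne_of_gt (by linarith)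
    have hst : (ξ - x) / (ξ - b) + (x - b) / (ξ - b) = 1 := by
      rw [← add_div, show ξ - x + (x - b) = ξ - b by ring, div_self hne]
    have hcomb : ((ξ - x) / (ξ - b)) • b + ((x - b) / (ξ - b)) • ξ = x := by
      simp only [smul_eq_mul]
      rw [div_mul_eq_mul_div, div_mul_eq_mul_div, ← add_div, div_eq_iff hne]
      ring
    have h2 := hconc.2 (Set.mem_Ioi.mpr hb) (Set.mem_Ioi.mpr hξpos) hs ht hst
    rw [hcomb, hψb, hψξ, smul_eq_mul, smul_eq_mul] at h2
    simp only [mul_zero, zero_add] at h2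
    linarith
  have hψright : ∀ x : ℝ, ξ ≤ x → x ≤ a → ψ x ≤ 0 := by
    intro x hξx hxa
    rcases eq_or_lt_of_le hξx with rfl | hξx
    · exact le_of_eq hψξ
    · have hs : (0:ℝ) ≤ (x - ξ) / (x - b) := by apply div_nonneg <;> linarith
      have ht : (0:ℝ) < (ξ - b) / (x - b) := by apply div_pos <;> linarith
      have hne : (x:ℝ) - b ≠ 0 := ne_of_gt (by linarith)
      have hst : (x - ξ) / (x - b) + (ξ - b) / (x - b) = 1 := by
        rw [← add_div, show x - ξ + (ξ - b) = x - b by ring, div_self hne]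
      have hcomb : ((x - ξ) / (x - b)) • b + ((ξ - b) / (x - b)) • x = ξ := by
        simp only [smul_eq_mul]
        rw [div_mul_eq_mul_div, div_mul_eq_mul_div, ← add_div, div_eq_iff hne]
        ring
      have hxpos : (0:ℝ) < x := hξpos.trans hξx
      have h2 := hconc.2 (Set.mem_Ioi.mpr hb) (Set.mem_Ioi.mpr hxpos) hs ht.le hst
      rw [hcomb, hψb, hψξ, smul_eq_mul, smul_eq_mul] at h2
      have h3 : ((ξ - b) / (x - b)) * ψ x ≤ ((ξ - b) / (x - b)) * 0 := by linarith
      exact (mul_le_mul_iff_right₀ ht).mp h3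
  -- monotonicity of h
  have hIccb : Set.Icc b ξ ⊆ Set.Ioi (0:ℝ) := fun x hx => lt_of_lt_of_le hb hx.1
  have hIccr : Set.Icc ξ a ⊆ Set.Ioi (0:ℝ) := fun x hx => lt_of_lt_of_le hξpos hx.1
  have hIocl : Set.Ioc (0:ℝ) b ⊆ Set.Ioi (0:ℝ) := fun x hx => hx.1
  have hmono : MonotoneOn h (Set.Icc b ξ) := by
    refine monotoneOn_of_deriv_nonneg (convex_Icc _ _) (hcIoi.mono hIccb)
      (hdIoi.mono (fun x hx => hIccb (interior_subset hx))) ?_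
    intro x hx
    rw [interior_Icc] at hx
    rw [(hderiv x (hIccb (Set.Ioo_subset_Icc_self hx))).deriv]
    exact hψmid x hx.1.le hx.2.le
  have hanti1 : AntitoneOn h (Set.Ioc (0:ℝ) b) := by
    refine antitoneOn_of_deriv_nonpos (convex_Ioc _ _) (hcIoi.mono hIocl)
      (hdIoi.mono (fun x hx => hIocl (interior_subset hx))) ?_
    intro x hx
    rw [interior_Ioc] at hx
    rw [(hderiv x hx.1).deriv]
    exact hψleft x hx.1 hx.2.le
  have hanti2 : AntitoneOn h (Set.Icc ξ a) := by
    refine antitoneOn_of_deriv_nonpos (convex_Icc _ _) (hcIoi.mono hIccr)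
      (hdIoi.mono (fun x hx => hIccr (interior_subset hx))) ?_
    intro x hx
    rw [interior_Icc] at hx
    rw [(hderiv x (hIccr (Set.Ioo_subset_Icc_self hx))).deriv]
    exact hψright x hx.1.le hx.2.le
  -- conclusion
  intro x hx hxa
  have hx0 : 0 ≤ h x := by
    rcases le_or_gt x b with hxb | hbx
    · have := hanti1 ⟨hx, hxb⟩ ⟨hb, le_refl b⟩ hxb
      rw [hhb] at this; linarith
    · rcases le_or_gt x ξ with hxξ | hξx
      · have := hmono ⟨le_refl b, hξ1.le⟩ ⟨hbx.le, hxξ⟩ hbx.le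
        rw [hhb] at this; linarith
      · have := hanti2 ⟨hξx.le, hxa⟩ ⟨hξ2.le, le_refl a⟩ hxa
        rw [hha] at this; linarith
  rw [hh] at hx0
  simp only [] at hx0
  linarith

set_option maxHeartbeats 2000000 in
/-- Proposition 1(b): the point `p* = u_r + d₀·√(1−1/r)·(1, −1/(r−1), …, −1/(r−1))`
minimizes the symmetrized Kullback–Leibler divergence
`J(u_r, p) = ∑ (p i − 1/r)·ln(p i)` over all strictly positive probability
vectors `p` at Euclidean distance `d₀` from `u_r`. -/
theorem prop1b_minimizer (r : ℕ) (hr : 2 ≤ r) (d₀ : ℝ)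
    (hd0 : 0 < d₀) (hd1 : d₀ < Real.sqrt (1 - 1 / (r : ℝ)))
    (pstar : Fin r → ℝ)
    (hp : ∀ i, pstar i =
      if i = ⟨0, by omega⟩ then 1 / (r : ℝ) + d₀ * Real.sqrt (1 - 1 / (r : ℝ))
      else 1 / (r : ℝ) - d₀ * Real.sqrt (1 - 1 / (r : ℝ)) / ((r : ℝ) - 1)) :
    ∀ p : Fin r → ℝ, (∀ i, 0 < p i) → (∑ i, p i = 1) →
      (∑ i, (p i - 1 / (r : ℝ)) ^ 2 = d₀ ^ 2) →
      ∑ i, (pstar i - 1 / (r : ℝ)) * Real.log (pstar i)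
        ≤ ∑ i, (p i - 1 / (r : ℝ)) * Real.log (p i) := by
  intro p hpos hsum hsq
  set c : ℝ := 1 / (r : ℝ) with hcdef
  set s : ℝ := Real.sqrt (1 - 1 / (r : ℝ)) with hsdef
  set a : ℝ := c + d₀ * s with hadef
  set b : ℝ := c - d₀ * s / ((r : ℝ) - 1) with hbdef
  set L : ℝ := Real.log b + 1 - c / b with hLdef
  have hr2 : (2:ℝ) ≤ (r:ℝ) := by exact_mod_cast hr
  have hrpos : (0:ℝ) < (r:ℝ) := by linarith
  have hrne : (r:ℝ) ≠ 0 := ne_of_gt hrpos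
  have hr1 : (1:ℝ) ≤ (r:ℝ) - 1 := by linarith
  have hr1ne : (r:ℝ) - 1 ≠ 0 := by linarith
  have hc : 0 < c := by positivity
  have hc1 : c * (r:ℝ) = 1 := by rw [hcdef]; field_simp
  have h1c : 1 - c = ((r:ℝ) - 1) * c := by
    rw [hcdef]; field_simp
  have hs2 : s ^ 2 = 1 - c := by
    rw [hsdef, hcdef, Real.sq_sqrt]
    rw [sub_nonneg]
    rw [div_le_one hrpos]; linarith
  have hspos : 0 < s := hd0.trans hd1
  have hds : d₀ * s < 1 - c := by
    have : d₀ * s < s * s := by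
      apply mul_lt_mul_of_pos_right hd1 hspos |>.trans_le
      exact le_of_eq (mul_comm s s)
    calc d₀ * s < s * s := this
    _ = s ^ 2 := by ring
    _ = 1 - c := hs2
  have hbpos : 0 < b := by
    rw [hbdef, sub_pos, div_lt_iff₀ (by linarith : (0:ℝ) < (r:ℝ) - 1)]
    calc d₀ * s < 1 - c := hds
    _ = ((r:ℝ) - 1) * c := h1c
    _ = c * ((r:ℝ) - 1) := by ring
  have hba : b < a := by
    rw [hbdef, hadef]
    have : 0 < d₀ * s / ((r:ℝ) - 1) := by positivity
    have h2 : 0 < d₀ * s := by positivity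
    linarith
  have habne : a - b ≠ 0 := ne_of_gt (by linarith)
  set μ : ℝ := ((a - c) * Real.log a - (b - c) * Real.log b - L * (a - b)) / (a - b) ^ 2
    with hμdef
  have hμeq : (a - c) * Real.log a = (b - c) * Real.log b + L * (a - b) + μ * (a - b) ^ 2 := by
    rw [hμdef, div_mul_cancel₀ _ (pow_ne_zero 2 habne)]
    ring
  have hkey := key_ineq c b a μ L hc hbpos hba hLdef hμeq
  clear_value c s a b L μ
  -- upper bound on each coordinate of p
  have hub : ∀ i, p i ≤ a := by
    intro i
    have hmem := Finset.mem_univ i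
    have hsum' : p i + ∑ j ∈ Finset.univ.erase i, p j = 1 := by
      rw [Finset.add_sum_erase _ _ hmem]; exact hsum
    have hsq' : (p i - c) ^ 2 + ∑ j ∈ Finset.univ.erase i, (p j - c) ^ 2 = d₀ ^ 2 := by
      rw [Finset.add_sum_erase _ (fun j => (p j - c) ^ 2) hmem]; exact hsq
    have hcard : ((Finset.univ.erase i).card : ℝ) = (r:ℝ) - 1 := by
      rw [Finset.card_erase_of_mem hmem, Finset.card_univ, Fintype.card_fin]
      rw [Nat.cast_sub (by omega)]
      norm_num
    have hCS := sq_sum_le_card_mul_sum_sq (s := Finset.univ.erase i)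
      (f := fun j => p j - c)
    rw [hcard] at hCS
    have hesum : ∑ j ∈ Finset.univ.erase i, (p j - c) = -(p i - c) := by
      have : ∑ j ∈ Finset.univ.erase i, (p j - c)
          = (∑ j ∈ Finset.univ.erase i, p j) - ((r:ℝ) - 1) * c := by
        rw [Finset.sum_sub_distrib, Finset.sum_const, nsmul_eq_mul, hcard]
      rw [this]
      have : (∑ j ∈ Finset.univ.erase i, p j) = 1 - p i := by linarith
      rw [this]
      have : ((r:ℝ) - 1) * c = 1 - c := h1c.symm
      rw [this]; ring
    rw [hesum] at hCS
    have hesq : ∑ j ∈ Finset.univ.erase i, (p j - c) ^ 2 = d₀ ^ 2 - (p i - c) ^ 2 := by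
      linarith
    rw [hesq] at hCS
    rw [neg_sq] at hCS
    have hrs : ((r:ℝ) - 1) = (r:ℝ) * (1 - c) := by
      rw [h1c]; linear_combination (1 - (r:ℝ)) * hc1
    have h5 : (r:ℝ) * (p i - c) ^ 2 ≤ ((r:ℝ) - 1) * d₀ ^ 2 := by nlinarith [hCS]
    have h7 : ((r:ℝ) - 1) * d₀ ^ 2 = (r:ℝ) * ((d₀ * s) ^ 2) := by
      rw [hrs, ← hs2]; ring
    have he2 : (p i - c) ^ 2 ≤ (d₀ * s) ^ 2 := by nlinarith [h5, h7, hrpos]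
    have hdspos : 0 < d₀ * s := mul_pos hd0 hspos
    have he3 : p i - c ≤ d₀ * s := by nlinarith [he2, hdspos]
    rw [hadef]
    linarith
  -- the tangent quadratic
  set T : ℝ → ℝ := fun x => (b - c) * Real.log b + L * (x - b) + μ * (x - b) ^ 2 with hT
  clear_value T
  -- sum of T over any feasible vector
  have hTsum : ∀ q : Fin r → ℝ, (∑ i, q i = 1) → (∑ i, (q i - c) ^ 2 = d₀ ^ 2) →
      ∑ i, T (q i) = (r:ℝ) * ((b - c) * Real.log b + L * (c - b) + μ * (c - b) ^ 2)
        + (L + 2 * μ * (c - b)) * (1 - (r:ℝ) * c) + μ * d₀ ^ 2 := by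
    intro q h1 h2
    have e1 : ∀ i, T (q i) = ((b - c) * Real.log b + L * (c - b) + μ * (c - b) ^ 2)
        + (L + 2 * μ * (c - b)) * (q i - c) + μ * (q i - c) ^ 2 := by
      intro i; rw [hT]; ring
    rw [Finset.sum_congr rfl (fun i _ => e1 i)]
    rw [Finset.sum_add_distrib, Finset.sum_add_distrib, Finset.sum_const, ← Finset.mul_sum,
      ← Finset.mul_sum]
    have hsum0 : ∑ i, (q i - c) = 1 - (r:ℝ) * c := by
      rw [Finset.sum_sub_distrib, Finset.sum_const, Finset.card_univ, Fintype.card_fin,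
        nsmul_eq_mul, h1]
    rw [hsum0, h2, Finset.card_univ, Fintype.card_fin, nsmul_eq_mul]
  -- pstar satisfies the constraints
  set i0 : Fin r := ⟨0, by omega⟩ with hi0
  have hps : ∀ i, pstar i = if i = i0 then a else b := fun i => hp i
  have hsplit : ∀ f : ℝ → ℝ, ∑ i, f (pstar i) = f a + ((r:ℝ) - 1) * f b := by
    intro f
    rw [← Finset.add_sum_erase _ (fun i => f (pstar i)) (Finset.mem_univ i0)]
    have h1 : f (pstar i0) = f a := by rw [hps i0]; simp
    have h2 : ∀ j ∈ Finset.univ.erase i0, f (pstar j) = f b := by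
      intro j hj
      rw [hps j, if_neg (Finset.ne_of_mem_erase hj)]
    rw [h1, Finset.sum_congr rfl h2, Finset.sum_const]
    have hcard : ((Finset.univ.erase i0).card : ℝ) = (r:ℝ) - 1 := by
      rw [Finset.card_erase_of_mem (Finset.mem_univ i0), Finset.card_univ, Fintype.card_fin]
      rw [Nat.cast_sub (by omega)]
      norm_num
    rw [nsmul_eq_mul, hcard]
  have hsum_star : ∑ i, pstar i = 1 := by
    have h0 := hsplit id
    simp only [id] at h0
    rw [h0, hadef, hbdef]
    have h3 : ((r:ℝ) - 1) * (d₀ * s / ((r:ℝ) - 1)) = d₀ * s := by field_simp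
    rw [mul_sub, h3, show ((r:ℝ) - 1) * c = 1 - c from h1c.symm]
    ring
  have hsq_star : ∑ i, (pstar i - c) ^ 2 = d₀ ^ 2 := by
    have := hsplit (fun x => (x - c) ^ 2)
    rw [this, hadef, hbdef]
    have expand : (c + d₀ * s - c) ^ 2 + ((r:ℝ) - 1) * (c - d₀ * s / ((r:ℝ) - 1) - c) ^ 2
        = d₀ ^ 2 * (s ^ 2 * ((r:ℝ) / ((r:ℝ) - 1))) := by
      field_simp
      ring
    have h4 : (1 - c) * ((r:ℝ) / ((r:ℝ) - 1)) = 1 := by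
      rw [h1c]
      field_simp
      linear_combination hc1
    rw [expand, hs2, h4, mul_one]
  -- ∑ φ(pstar) = ∑ T(pstar)
  have hstar_eq : ∑ i, (pstar i - c) * Real.log (pstar i) = ∑ i, T (pstar i) := by
    apply Finset.sum_congr rfl
    intro i _
    rw [hps i]
    by_cases h : i = i0
    · rw [if_pos h, hT]
      simpa using hμeq
    · rw [if_neg h, hT]
      ring
  -- conclude
  have hTp : ∑ i, T (pstar i) = ∑ i, T (p i) := by
    rw [hTsum pstar hsum_star hsq_star, hTsum p hsum hsq]
  have hineq : ∑ i, T (p i) ≤ ∑ i, (p i - c) * Real.log (p i) := by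
    apply Finset.sum_le_sum
    intro i _
    have hki := hkey (p i) (hpos i) (hub i)
    have hTx : T (p i) = (b - c) * Real.log b + L * (p i - b) + μ * (p i - b) ^ 2 := by
      rw [hT]
    rw [hTx]
    exact hki
  calc ∑ i, (pstar i - c) * Real.log (pstar i)
      = ∑ i, T (pstar i) := hstar_eq
    _ = ∑ i, T (p i) := hTp
    _ ≤ ∑ i, (p i - c) * Real.log (p i) := hineq
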